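/- For every edge price α > 2n−6, no stable (pure Nash equilibrium) network (G(s),α) of a network creation game with n agents contains a strong critical pair. -/

import Mathlib

open scoped BigOperators

namespace NCG

variable {V : Type*} [Fintype V] [DecidableEq V]

/-- The network induced by a strategy vector `st`: `{u,v}` is an edge iff (at least)
one of the endpoints buys it, i.e. `v ∈ st u` or `u ∈ st v`. -/
def graph (st : V → Finset V) : SimpleGraph V where
  Adj u v := u ≠ v ∧ (v ∈ st u ∨ u ∈ st v)
  symm := ⟨fun u v h => ⟨h.1.symm, h.2.symm⟩⟩
  loopless := ⟨fun u h => h.1 rfl⟩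

open scoped Classical in
/-- The distance cost of agent `u`: the sum of the graph distances to all nodes if the
network is connected, and `⊤` otherwise. -/
noncomputable def distcost (st : V → Finset V) (u : V) : EReal :=
  if (graph st).Connected then (((∑ w : V, ((graph st).dist u w : ℝ)) : ℝ) : EReal) else ⊤

/-- The cost of agent `u`: `α` per bought edge plus the distance cost. -/
noncomputable def cost (α : ℝ) (st : V → Finset V) (u : V) : EReal :=
  ((α * (st u).card : ℝ) : EReal) + distcost st u

/-- A network is stable (a pure Nash equilibrium) if no agent `u` can strictly
decrease her cost by unilaterally changing her own strategy set `st u`. -/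
def Stable (α : ℝ) (st : V → Finset V) : Prop :=
  ∀ u : V, ∀ t : Finset V, u ∉ t → cost α st u ≤ cost α (Function.update st u t) u

/-- The social cost of a network: the sum of the costs of all agents. -/
noncomputable def socialCost (α : ℝ) (st : V → Finset V) : EReal :=
  ∑ u : V, cost α st u

/-- The optimal (minimum) social cost over all strategy vectors on agent set `W`. -/
noncomputable def optCost (α : ℝ) (W : Type*) [Fintype W] [DecidableEq W] : EReal :=
  sInf {c : EReal | ∃ st : W → Finset W, (∀ u, u ∉ st u) ∧ c = socialCost α st}

/-- `T` is a shortest path tree of `G` rooted at `r`: a spanning tree of `G`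
preserving all distances from `r`. -/
def IsSPT (G : SimpleGraph V) (r : V) (T : SimpleGraph V) : Prop :=
  T ≤ G ∧ T.IsTree ∧ ∀ x, T.dist r x = G.dist r x

/-- The subgraph of `G` induced on `S` is biconnected: it has at least 3 vertices,
it is connected, and it has no cut vertex. -/
def IsBiconnectedOn (G : SimpleGraph V) (S : Set V) : Prop :=
  3 ≤ S.ncard ∧ (G.induce S).Connected ∧ ∀ x ∈ S, (G.induce (S \ {x})).Connected

/-- `S` induces a biconnected component of `G`: a maximal biconnected induced subgraph. -/
def IsBiconnectedComponent (G : SimpleGraph V) (S : Set V) : Prop :=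
  IsBiconnectedOn G S ∧ ∀ S' : Set V, S ⊆ S' → IsBiconnectedOn G S' → S' = S

/-- `⟨v,u⟩` is a critical pair (with witnesses `v₁, v₂, u'` and biconnected component `H`)
of the network induced by the strategy vector `st`:
(1) `v ∈ H` buys the two distinct non-bridge edges `(v,v₁)` and `(v,v₂)` with `v₁,v₂ ∈ H`;
(2) `u ∈ H`, `u ≠ v`, buys an edge `(u,u')` with `u' ∈ H`, `u' ≠ v`;
(3) `d(v,u) ≥ 2`;
(4) some shortest path from `v` to `u` uses the edge `(v,v₁)`;
(5) some shortest path from `v` to `u'` does not use the edge `(u,u')`. -/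
def IsCriticalPair (st : V → Finset V) (H : Set V) (v u v₁ v₂ u' : V) : Prop :=
  IsBiconnectedComponent (graph st) H ∧
  v ∈ H ∧ v₁ ∈ H ∧ v₂ ∈ H ∧ v₁ ≠ v₂ ∧
  v₁ ∈ st v ∧ v₂ ∈ st v ∧
  ¬ (graph st).IsBridge (s(v, v₁)) ∧ ¬ (graph st).IsBridge s(v, v₂) ∧
  u ∈ H ∧ u ≠ v ∧ u' ∈ H ∧ u' ≠ v ∧ u' ∈ st u ∧
  2 ≤ (graph st).dist v u ∧
  (∃ p : (graph st).Walk v u, p.IsPath ∧ p.length = (graph st).dist v u ∧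
    s(v, v₁) ∈ p.edges) ∧
  (∃ p : (graph st).Walk v u', p.IsPath ∧ p.length = (graph st).dist v u' ∧
    s(u, u') ∉ p.edges)

/-- A critical pair is strong if moreover some shortest path from `u` to `v₂`
does not use the edge `(v,v₂)`. -/
def IsStrongCriticalPair (st : V → Finset V) (H : Set V) (v u v₁ v₂ u' : V) : Prop :=
  IsCriticalPair st H v u v₁ v₂ u' ∧
  ∃ p : (graph st).Walk u v₂, p.IsPath ∧ p.length = (graph st).dist u v₂ ∧
    s(v, v₂) ∉ p.edges

/-- A cycle `c` in `G` is a min cycle if for every two vertices on the cycle, their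
distance along the cycle equals their distance in `G`. -/
def IsMinCycle (G : SimpleGraph V) {a : V} (c : G.Walk a a) : Prop :=
  c.IsCycle ∧ ∀ (x : V) (hx : x ∈ c.toSubgraph.verts) (y : V) (hy : y ∈ c.toSubgraph.verts),
    c.toSubgraph.coe.dist ⟨x, hx⟩ ⟨y, hy⟩ = G.dist x y

/-- A cycle `c` of the network induced by `st` is directed if, traversed in one of the
two possible directions, every edge of the cycle is bought by its tail vertex. -/
def IsDirectedCycle (st : V → Finset V) {a : V} (c : (graph st).Walk a a) : Prop :=
  c.IsCycle ∧
    ((∀ i < c.length, c.getVert (i + 1) ∈ st (c.getVert i)) ∨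
     (∀ i < c.length, c.getVert i ∈ st (c.getVert (i + 1))))

/-- `c` is a centroid of (the subgraph of `G` induced on) `S`: every connected component
obtained from `S` by removing `c` contains at most `|S|/2` vertices. -/
def IsCentroidOn (G : SimpleGraph V) (S : Set V) (c : V) : Prop :=
  c ∈ S ∧ ∀ x ∈ S, x ≠ c →
    2 * {y | y ∈ S ∧ ∃ p : G.Walk x y, c ∉ p.support ∧ ∀ z ∈ p.support, z ∈ S}.ncard
      ≤ S.ncard

end NCG

section AuxNCG

open SimpleGraph

variable {V : Type*} [Fintype V] [DecidableEq V]

omit [Fintype V] [DecidableEq V] in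
lemma NCGaux.walk_length_one_edge {G : SimpleGraph V} {a b : V} (p : G.Walk a b)
    (h : p.length = 1) : s(a, b) ∈ p.edges := by
  cases p with
  | nil => simp at h
  | cons h' p' =>
    have : p'.length = 0 := by simpa using h
    have hb := SimpleGraph.Walk.eq_of_length_eq_zero this
    subst hb
    simp

omit [Fintype V] in
lemma NCGaux.start_not_mem_dropUntil_support {G : SimpleGraph V} {a b c : V} {p : G.Walk a b}
    (hp : p.IsPath) (hc : c ∈ p.support) (hne : c ≠ a) : a ∉ (p.dropUntil c hc).support := by
  intro ha
  have hnd := hp.support_nodup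
  have hspec := p.take_spec hc
  rw [← hspec, SimpleGraph.Walk.support_append] at hnd
  have hdisj := List.disjoint_of_nodup_append hnd
  have haT : a ∈ (p.takeUntil c hc).support := SimpleGraph.Walk.start_mem_support _
  have htail : a ∈ (p.dropUntil c hc).support.tail := by
    have hcons := SimpleGraph.Walk.support_eq_cons (p.dropUntil c hc)
    rw [hcons] at ha
    rcases List.mem_cons.mp ha with ha | ha
    · exact absurd ha.symm hne
    · exact ha
  exact hdisj haT htail

omit [Fintype V] [DecidableEq V] in
lemma NCGaux.exists_walk_of_forall_edges {G G' : SimpleGraph V} {a b : V} (p : G.Walk a b)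
    (h : ∀ x y : V, G.Adj x y → s(x, y) ∈ p.edges → G'.Adj x y) :
    ∃ q : G'.Walk a b, q.length = p.length := by
  refine ⟨p.transfer G' ?_, p.length_transfer _⟩
  intro e he
  revert he
  refine Sym2.ind (fun x y he => ?_) e
  have hadj : G.Adj x y := p.edges_subset_edgeSet he
  exact (h x y hadj he)

omit [Fintype V] in
lemma NCGaux.claimB {G G' : SimpleGraph V} (hconn : G.Connected) {v u v₁ v₂ : V}
    (hD : 2 ≤ G.dist v u)
    (hv1v : v₁ ≠ v) (hv2v : v₂ ≠ v)
    (hadj' : G'.Adj v u)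
    (htrans : ∀ x y : V, G.Adj x y → s(x, y) ≠ s(v, v₁) → s(x, y) ≠ s(v, v₂) → G'.Adj x y)
    (huv₁ : G.dist u v₁ + 1 ≤ G.dist v u)
    (hQ : ∃ q : G'.Walk u v₂, q.length ≤ G.dist v u + 1) :
    ∀ w, ∃ q : G'.Walk u w, q.length ≤ G.dist u w := by
  intro w
  obtain ⟨p0, hp0len⟩ := (hconn.preconnected u w).exists_walk_length_eq_dist
  set S := p0.bypass with hSdef
  have hSpath : S.IsPath := p0.bypass_isPath
  have hSlen : S.length ≤ G.dist u w := hp0len ▸ p0.length_bypass_le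
  by_cases hvS : v ∈ S.support
  · have hlen12 : (S.takeUntil v hvS).length + (S.dropUntil v hvS).length = S.length := by
      have := congrArg SimpleGraph.Walk.length (S.take_spec hvS)
      rwa [SimpleGraph.Walk.length_append] at this
    have hS₁ : G.dist u v ≤ (S.takeUntil v hvS).length := SimpleGraph.dist_le _
    have hcm : G.dist u v = G.dist v u := SimpleGraph.dist_comm
    set S₂ := S.dropUntil v hvS with hS₂def
    have hS₂path : S₂.IsPath := hSpath.dropUntil hvS
    by_cases h1 : s(v, v₁) ∈ S₂.edges
    · exfalso
      have hv₁S : v₁ ∈ S₂.support := S₂.snd_mem_support_of_mem_edges h1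
      have hAB : (S₂.takeUntil v₁ hv₁S).length + (S₂.dropUntil v₁ hv₁S).length = S₂.length := by
        have := congrArg SimpleGraph.Walk.length (S₂.take_spec hv₁S)
        rwa [SimpleGraph.Walk.length_append] at this
      have hA1 : 1 ≤ (S₂.takeUntil v₁ hv₁S).length := by
        rcases Nat.eq_zero_or_pos (S₂.takeUntil v₁ hv₁S).length with h0 | h0
        · exact absurd (SimpleGraph.Walk.eq_of_length_eq_zero h0).symm hv1v
        · exact h0
      have hBw : G.dist v₁ w ≤ (S₂.dropUntil v₁ hv₁S).length := SimpleGraph.dist_le _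
      have htri : G.dist u w ≤ G.dist u v₁ + G.dist v₁ w := hconn.dist_triangle
      omega
    · by_cases h2 : s(v, v₂) ∈ S₂.edges
      · have hv₂S : v₂ ∈ S₂.support := S₂.snd_mem_support_of_mem_edges h2
        have hAB : (S₂.takeUntil v₂ hv₂S).length + (S₂.dropUntil v₂ hv₂S).length = S₂.length := by
          have := congrArg SimpleGraph.Walk.length (S₂.take_spec hv₂S)
          rwa [SimpleGraph.Walk.length_append] at this
        have hA1 : 1 ≤ (S₂.takeUntil v₂ hv₂S).length := by
          rcases Nat.eq_zero_or_pos (S₂.takeUntil v₂ hv₂S).length with h0 | h0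
          · exact absurd (SimpleGraph.Walk.eq_of_length_eq_zero h0).symm hv2v
          · exact h0
        have hvB : v ∉ (S₂.dropUntil v₂ hv₂S).support :=
          NCGaux.start_not_mem_dropUntil_support hS₂path hv₂S hv2v
        obtain ⟨B', hB'⟩ := NCGaux.exists_walk_of_forall_edges (S₂.dropUntil v₂ hv₂S)
          (fun x y hxy hmem => htrans x y hxy
            (fun hEq => hvB ((S₂.dropUntil v₂ hv₂S).fst_mem_support_of_mem_edges (hEq ▸ hmem)))
            (fun hEq => hvB ((S₂.dropUntil v₂ hv₂S).fst_mem_support_of_mem_edges (hEq ▸ hmem))))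
        obtain ⟨q, hq⟩ := hQ
        refine ⟨q.append B', ?_⟩
        rw [SimpleGraph.Walk.length_append, hB']
        omega
      · obtain ⟨S₂', hS₂'⟩ := NCGaux.exists_walk_of_forall_edges S₂
          (fun x y hxy hmem => htrans x y hxy (fun hEq => h1 (hEq ▸ hmem))
            (fun hEq => h2 (hEq ▸ hmem)))
        refine ⟨SimpleGraph.Walk.cons hadj'.symm S₂', ?_⟩
        rw [SimpleGraph.Walk.length_cons, hS₂']
        omega
  · obtain ⟨S', hS'⟩ := NCGaux.exists_walk_of_forall_edges S
      (fun x y hxy hmem => htrans x y hxy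
        (fun hEq => hvS (S.fst_mem_support_of_mem_edges (hEq ▸ hmem)))
        (fun hEq => hvS (S.fst_mem_support_of_mem_edges (hEq ▸ hmem))))
    exact ⟨S', by omega⟩

omit [Fintype V] in
lemma NCGaux.claimB' {G G'' : SimpleGraph V} (hconn : G.Connected) {v u u' : V}
    (hD : 2 ≤ G.dist v u)
    (hu'u : u' ≠ u)
    (hadj'' : G''.Adj v u)
    (htrans : ∀ x y : V, G.Adj x y → s(x, y) ≠ s(u, u') → G''.Adj x y)
    (hR : ∃ r : G''.Walk v u', r.length ≤ G.dist v u + 1) :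
    ∀ w, ∃ q : G''.Walk v w, q.length ≤ G.dist v w := by
  intro w
  obtain ⟨p0, hp0len⟩ := (hconn.preconnected v w).exists_walk_length_eq_dist
  set S := p0.bypass with hSdef
  have hSpath : S.IsPath := p0.bypass_isPath
  have hSlen : S.length ≤ G.dist v w := hp0len ▸ p0.length_bypass_le
  by_cases he : s(u, u') ∈ S.edges
  · have huS : u ∈ S.support := S.fst_mem_support_of_mem_edges he
    have hlen12 : (S.takeUntil u huS).length + (S.dropUntil u huS).length = S.length := by
      have := congrArg SimpleGraph.Walk.length (S.take_spec huS)
      rwa [SimpleGraph.Walk.length_append] at this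
    have hS₁ : G.dist v u ≤ (S.takeUntil u huS).length := SimpleGraph.dist_le _
    set S₂ := S.dropUntil u huS with hS₂def
    have hS₂path : S₂.IsPath := hSpath.dropUntil huS
    by_cases he2 : s(u, u') ∈ S₂.edges
    · have hu'S : u' ∈ S₂.support := S₂.snd_mem_support_of_mem_edges he2
      have hAB : (S₂.takeUntil u' hu'S).length + (S₂.dropUntil u' hu'S).length = S₂.length := by
        have := congrArg SimpleGraph.Walk.length (S₂.take_spec hu'S)
        rwa [SimpleGraph.Walk.length_append] at this
      have hA1 : 1 ≤ (S₂.takeUntil u' hu'S).length := by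
        rcases Nat.eq_zero_or_pos (S₂.takeUntil u' hu'S).length with h0 | h0
        · exact absurd (SimpleGraph.Walk.eq_of_length_eq_zero h0).symm hu'u
        · exact h0
      have huB : u ∉ (S₂.dropUntil u' hu'S).support :=
        NCGaux.start_not_mem_dropUntil_support hS₂path hu'S hu'u
      obtain ⟨B', hB'⟩ := NCGaux.exists_walk_of_forall_edges (S₂.dropUntil u' hu'S)
        (fun x y hxy hmem => htrans x y hxy
          (fun hEq => huB ((S₂.dropUntil u' hu'S).fst_mem_support_of_mem_edges (hEq ▸ hmem))))
      obtain ⟨r, hr⟩ := hR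
      refine ⟨r.append B', ?_⟩
      rw [SimpleGraph.Walk.length_append, hB']
      omega
    · obtain ⟨S₂', hS₂'⟩ := NCGaux.exists_walk_of_forall_edges S₂
        (fun x y hxy hmem => htrans x y hxy (fun hEq => he2 (hEq ▸ hmem)))
      refine ⟨SimpleGraph.Walk.cons hadj'' S₂', ?_⟩
      rw [SimpleGraph.Walk.length_cons, hS₂']
      omega
  · obtain ⟨S', hS'⟩ := NCGaux.exists_walk_of_forall_edges S
      (fun x y hxy hmem => htrans x y hxy (fun hEq => he (hEq ▸ hmem)))
    exact ⟨S', by omega⟩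

omit [Fintype V] in
/-- Adjacency is preserved when agent `v` swaps `{v₁, v₂}` for `u`, provided the edge is not
one of the two deleted ones. -/
lemma NCGaux.adj_update_two {st : V → Finset V} {v v₁ v₂ u : V} {x y : V}
    (h : (NCG.graph st).Adj x y) (h1 : s(x, y) ≠ s(v, v₁)) (h2 : s(x, y) ≠ s(v, v₂)) :
    (NCG.graph (Function.update st v (insert u (((st v).erase v₁).erase v₂)))).Adj x y := by
  obtain ⟨hxy, hb⟩ := h
  refine ⟨hxy, ?_⟩
  rcases hb with hb | hb
  · by_cases hx : x = v
    · subst hx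
      left
      rw [Function.update_self]
      have hy1 : y ≠ v₁ := by rintro rfl; exact h1 rfl
      have hy2 : y ≠ v₂ := by rintro rfl; exact h2 rfl
      exact Finset.mem_insert_of_mem (Finset.mem_erase.mpr ⟨hy2, Finset.mem_erase.mpr ⟨hy1, hb⟩⟩)
    · left; rw [Function.update_of_ne hx]; exact hb
  · by_cases hy : y = v
    · subst hy
      right
      rw [Function.update_self]
      have hx1 : x ≠ v₁ := by rintro rfl; exact h1 Sym2.eq_swap
      have hx2 : x ≠ v₂ := by rintro rfl; exact h2 Sym2.eq_swap
      exact Finset.mem_insert_of_mem (Finset.mem_erase.mpr ⟨hx2, Finset.mem_erase.mpr ⟨hx1, hb⟩⟩)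
    · right; rw [Function.update_of_ne hy]; exact hb

omit [Fintype V] in
/-- Adjacency is preserved when agent `u` swaps `u'` for `v`, provided the edge is not the
deleted one. -/
lemma NCGaux.adj_update_one {st : V → Finset V} {u u' v : V} {x y : V}
    (h : (NCG.graph st).Adj x y) (h1 : s(x, y) ≠ s(u, u')) :
    (NCG.graph (Function.update st u (insert v ((st u).erase u')))).Adj x y := by
  obtain ⟨hxy, hb⟩ := h
  refine ⟨hxy, ?_⟩
  rcases hb with hb | hb
  · by_cases hx : x = u
    · subst hx
      left
      rw [Function.update_self]
      have hy1 : y ≠ u' := by rintro rfl; exact h1 rfl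
      exact Finset.mem_insert_of_mem (Finset.mem_erase.mpr ⟨hy1, hb⟩)
    · left; rw [Function.update_of_ne hx]; exact hb
  · by_cases hy : y = u
    · subst hy
      right
      rw [Function.update_self]
      have hx1 : x ≠ u' := by rintro rfl; exact h1 Sym2.eq_swap
      exact Finset.mem_insert_of_mem (Finset.mem_erase.mpr ⟨hx1, hb⟩)
    · right; rw [Function.update_of_ne hy]; exact hb

end AuxNCG
/-- For `α > 2n−6`, no stable network contains a strong critical pair. -/
theorem no_strong_critical_pair {V : Type*} [Fintype V] [DecidableEq V]
    (α : ℝ) (st : V → Finset V) (hself : ∀ u, u ∉ st u)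
    (hα : 2 * (Fintype.card V : ℝ) - 6 < α)
    (hstable : NCG.Stable α st) :
    ¬ ∃ (H : Set V) (v u v₁ v₂ u' : V), NCG.IsStrongCriticalPair st H v u v₁ v₂ u' := by
  rintro ⟨H, v, u, v₁, v₂, u',
    ⟨⟨_hbc, _hvH, _hv1H, _hv2H, hv12, hv1b, hv2b, _hbr1, _hbr2, _huH, huv, _hu'H, hu'v, hu'b,
      hdist2, ⟨p₄, hp₄path, hp₄len, hp₄e⟩, ⟨r₀, hr₀path, hr₀len, hr₀e⟩⟩,
      q₀, hq₀path, hq₀len, hq₀e⟩⟩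
  classical
  -- Step 0 : the network is connected.
  have hconn : (NCG.graph st).Connected := by
    by_contra hnc
    have hstep := hstable v (Finset.univ.erase v) (Finset.notMem_erase v _)
    have hc2 : (NCG.graph (Function.update st v (Finset.univ.erase v))).Connected := by
      rw [SimpleGraph.connected_iff]
      refine ⟨fun x y => ?_, ⟨v⟩⟩
      have key : ∀ z : V, z ≠ v →
          (NCG.graph (Function.update st v (Finset.univ.erase v))).Adj v z := by
        intro z hz
        exact ⟨Ne.symm hz, Or.inl (by
          rw [Function.update_self]; exact Finset.mem_erase.mpr ⟨hz, Finset.mem_univ z⟩)⟩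
      have hvx : ∀ x : V,
          (NCG.graph (Function.update st v (Finset.univ.erase v))).Reachable v x := by
        intro x
        by_cases hx : x = v
        · subst hx; exact SimpleGraph.Reachable.refl _
        · exact (key x hx).reachable
      exact (hvx x).symm.trans (hvx y)
    have hl : NCG.cost α st v = ⊤ := by
      rw [NCG.cost, NCG.distcost, if_neg hnc]
      exact EReal.add_top_of_ne_bot (EReal.coe_ne_bot _)
    have hr : NCG.cost α (Function.update st v (Finset.univ.erase v)) v < ⊤ := by
      rw [NCG.cost, NCG.distcost, if_pos hc2, ← EReal.coe_add]
      exact EReal.coe_lt_top _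
    rw [hl] at hstep
    exact absurd (hstep.trans_lt hr) (lt_irrefl _)
  -- Step 1 : basic facts.
  have hv1v : v₁ ≠ v := fun h => hself v (h ▸ hv1b)
  have hv2v : v₂ ≠ v := fun h => hself v (h ▸ hv2b)
  have hu'u : u' ≠ u := fun h => hself u (h ▸ hu'b)
  have hadjvv₁ : (NCG.graph st).Adj v v₁ := ⟨Ne.symm hv1v, Or.inl hv1b⟩
  have hadjvv₂ : (NCG.graph st).Adj v v₂ := ⟨Ne.symm hv2v, Or.inl hv2b⟩
  have hadjuu' : (NCG.graph st).Adj u u' := ⟨Ne.symm hu'u, Or.inl hu'b⟩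
  have hnadjvu : ¬ (NCG.graph st).Adj v u := by
    intro h
    have h1 : (NCG.graph st).dist v u ≤ 1 := by
      have := SimpleGraph.dist_le h.toWalk
      simpa using this
    omega
  have hust : u ∉ st v := fun h => hnadjvu ⟨Ne.symm huv, Or.inl h⟩
  have hvst : v ∉ st u := fun h => hnadjvu ⟨Ne.symm huv, Or.inr h⟩
  have hdvv2 : (NCG.graph st).dist v v₂ ≤ 1 := by
    have := SimpleGraph.dist_le hadjvv₂.toWalk; simpa using this
  have hduu' : (NCG.graph st).dist u u' ≤ 1 := by
    have := SimpleGraph.dist_le hadjuu'.toWalk; simpa using this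
  -- Step 2 : distance facts from the witness walks.
  have huv₁ : (NCG.graph st).dist u v₁ + 1 ≤ (NCG.graph st).dist v u := by
    have hv₁p : v₁ ∈ p₄.support := p₄.snd_mem_support_of_mem_edges hp₄e
    have hAB : (p₄.takeUntil v₁ hv₁p).length + (p₄.dropUntil v₁ hv₁p).length = p₄.length := by
      have := congrArg SimpleGraph.Walk.length (p₄.take_spec hv₁p)
      rwa [SimpleGraph.Walk.length_append] at this
    have hA1 : 1 ≤ (p₄.takeUntil v₁ hv₁p).length := by
      rcases Nat.eq_zero_or_pos (p₄.takeUntil v₁ hv₁p).length with h0 | h0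
      · exact absurd (SimpleGraph.Walk.eq_of_length_eq_zero h0).symm hv1v
      · exact h0
    have hBle : (NCG.graph st).dist v₁ u ≤ (p₄.dropUntil v₁ hv₁p).length := SimpleGraph.dist_le _
    have hcm : (NCG.graph st).dist u v₁ = (NCG.graph st).dist v₁ u := SimpleGraph.dist_comm
    omega
  have hq₀le : q₀.length ≤ (NCG.graph st).dist v u + 1 := by
    have htri : (NCG.graph st).dist u v₂ ≤
        (NCG.graph st).dist u v + (NCG.graph st).dist v v₂ := hconn.dist_triangle
    have hcm : (NCG.graph st).dist u v = (NCG.graph st).dist v u := SimpleGraph.dist_comm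
    omega
  have hvq₀ : v ∉ q₀.support := by
    intro hv
    have hAB : (q₀.takeUntil v hv).length + (q₀.dropUntil v hv).length = q₀.length := by
      have := congrArg SimpleGraph.Walk.length (q₀.take_spec hv)
      rwa [SimpleGraph.Walk.length_append] at this
    have hA : (NCG.graph st).dist u v ≤ (q₀.takeUntil v hv).length := SimpleGraph.dist_le _
    have hB1 : 1 ≤ (q₀.dropUntil v hv).length := by
      rcases Nat.eq_zero_or_pos (q₀.dropUntil v hv).length with h0 | h0
      · exact absurd (SimpleGraph.Walk.eq_of_length_eq_zero h0) (Ne.symm hv2v)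
      · exact h0
    have hB2 : (q₀.dropUntil v hv).length ≠ 1 := by
      intro h1
      have := NCGaux.walk_length_one_edge (q₀.dropUntil v hv) h1
      exact hq₀e (q₀.edges_dropUntil_subset hv this)
    have hcm : (NCG.graph st).dist u v = (NCG.graph st).dist v u := SimpleGraph.dist_comm
    omega
  have hr₀le : r₀.length ≤ (NCG.graph st).dist v u + 1 := by
    have htri : (NCG.graph st).dist v u' ≤
        (NCG.graph st).dist v u + (NCG.graph st).dist u u' := hconn.dist_triangle
    omega
  -- Step 3 : the two deviating strategies.
  set tv : Finset V := insert u (((st v).erase v₁).erase v₂) with htv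
  set tu : Finset V := insert v ((st u).erase u') with htu
  have htransv : ∀ x y : V, (NCG.graph st).Adj x y → s(x, y) ≠ s(v, v₁) → s(x, y) ≠ s(v, v₂) →
      (NCG.graph (Function.update st v tv)).Adj x y :=
    fun x y h h1 h2 => NCGaux.adj_update_two h h1 h2
  have htransu : ∀ x y : V, (NCG.graph st).Adj x y → s(x, y) ≠ s(u, u') →
      (NCG.graph (Function.update st u tu)).Adj x y :=
    fun x y h h1 => NCGaux.adj_update_one h h1
  have hadj'vu : (NCG.graph (Function.update st v tv)).Adj v u :=
    ⟨Ne.symm huv, Or.inl (by rw [Function.update_self]; exact Finset.mem_insert_self _ _)⟩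
  have hadj''vu : (NCG.graph (Function.update st u tu)).Adj v u :=
    ⟨Ne.symm huv, Or.inr (by rw [Function.update_self]; exact Finset.mem_insert_self _ _)⟩
  have hQ : ∃ q : (NCG.graph (Function.update st v tv)).Walk u v₂,
      q.length ≤ (NCG.graph st).dist v u + 1 := by
    obtain ⟨q', hq'⟩ := NCGaux.exists_walk_of_forall_edges q₀
      (fun x y hxy hmem => htransv x y hxy
        (fun hEq => hvq₀ (q₀.fst_mem_support_of_mem_edges (hEq ▸ hmem)))
        (fun hEq => hvq₀ (q₀.fst_mem_support_of_mem_edges (hEq ▸ hmem))))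
    exact ⟨q', by omega⟩
  have hR : ∃ r : (NCG.graph (Function.update st u tu)).Walk v u',
      r.length ≤ (NCG.graph st).dist v u + 1 := by
    obtain ⟨r', hr'⟩ := NCGaux.exists_walk_of_forall_edges r₀
      (fun x y hxy hmem => htransu x y hxy (fun hEq => hr₀e (hEq ▸ hmem)))
    exact ⟨r', by omega⟩
  have hB := NCGaux.claimB hconn hdist2 hv1v hv2v hadj'vu htransv huv₁ hQ
  have hB' := NCGaux.claimB' hconn hdist2 hu'u hadj''vu htransu hR
  -- Step 4 : connectivity of the deviated networks.
  have hconn1 : (NCG.graph (Function.update st v tv)).Connected := by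
    rw [SimpleGraph.connected_iff]
    refine ⟨fun x y => ?_, ⟨v⟩⟩
    obtain ⟨qx, _⟩ := hB x
    obtain ⟨qy, _⟩ := hB y
    exact ⟨qx.reverse.append qy⟩
  have hconn2 : (NCG.graph (Function.update st u tu)).Connected := by
    rw [SimpleGraph.connected_iff]
    refine ⟨fun x y => ?_, ⟨v⟩⟩
    obtain ⟨qx, _⟩ := hB' x
    obtain ⟨qy, _⟩ := hB' y
    exact ⟨qx.reverse.append qy⟩
  -- Step 5 : distance bounds for the deviated networks.
  have f1 : ∀ w, (NCG.graph (Function.update st v tv)).dist v w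
      ≤ 1 + (NCG.graph st).dist u w := by
    intro w
    obtain ⟨q, hq⟩ := hB w
    have := SimpleGraph.dist_le (SimpleGraph.Walk.cons hadj'vu q)
    rw [SimpleGraph.Walk.length_cons] at this
    omega
  have f2 : ∀ w, (NCG.graph (Function.update st u tu)).dist u w
      ≤ 1 + (NCG.graph st).dist v w := by
    intro w
    obtain ⟨q, hq⟩ := hB' w
    have := SimpleGraph.dist_le (SimpleGraph.Walk.cons hadj''vu.symm q)
    rw [SimpleGraph.Walk.length_cons] at this
    omega
  have f5 : (NCG.graph (Function.update st v tv)).dist v u ≤ 1 := by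
    have := SimpleGraph.dist_le hadj'vu.toWalk; simpa using this
  have f6 : (NCG.graph (Function.update st u tu)).dist u v ≤ 1 := by
    have := SimpleGraph.dist_le hadj''vu.symm.toWalk; simpa using this
  -- Step 6 : cardinalities of the new strategies.
  have hcv : (st v).card = tv.card + 1 := by
    have h2v : v₂ ∈ (st v).erase v₁ := Finset.mem_erase.mpr ⟨Ne.symm hv12, hv2b⟩
    have hunot : u ∉ ((st v).erase v₁).erase v₂ :=
      fun h => hust (Finset.mem_of_mem_erase (Finset.mem_of_mem_erase h))
    have h1 : 1 ≤ ((st v).erase v₁).card := Finset.card_pos.mpr ⟨v₂, h2v⟩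
    have h2 : 1 ≤ (st v).card := Finset.card_pos.mpr ⟨v₁, hv1b⟩
    rw [htv, Finset.card_insert_of_notMem hunot, Finset.card_erase_of_mem h2v,
      Finset.card_erase_of_mem hv1b]
    rw [Finset.card_erase_of_mem hv1b] at h1
    omega
  have hcu : tu.card = (st u).card := by
    have hvnot : v ∉ (st u).erase u' := fun h => hvst (Finset.mem_of_mem_erase h)
    have h1 : 1 ≤ (st u).card := Finset.card_pos.mpr ⟨u', hu'b⟩
    rw [htu, Finset.card_insert_of_notMem hvnot, Finset.card_erase_of_mem hu'b]
    omega
  -- Step 7 : apply stability to the two deviations.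
  have hvt : v ∉ tv := by
    intro h
    rcases Finset.mem_insert.mp h with h | h
    · exact huv h.symm
    · exact hself v (Finset.mem_of_mem_erase (Finset.mem_of_mem_erase h))
  have hut : u ∉ tu := by
    intro h
    rcases Finset.mem_insert.mp h with h | h
    · exact huv h
    · exact hself u (Finset.mem_of_mem_erase h)
  have Hv := hstable v tv hvt
  have Hu := hstable u tu hut
  rw [NCG.cost, NCG.cost, NCG.distcost, NCG.distcost, if_pos hconn, if_pos hconn1,
    Function.update_self, ← EReal.coe_add, ← EReal.coe_add, EReal.coe_le_coe_iff] at Hv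
  rw [NCG.cost, NCG.cost, NCG.distcost, NCG.distcost, if_pos hconn, if_pos hconn2,
    Function.update_self, ← EReal.coe_add, ← EReal.coe_add, EReal.coe_le_coe_iff] at Hu
  -- Step 8 : final counting.
  set Sv : ℝ := ∑ w : V, ((NCG.graph st).dist v w : ℝ) with hSv
  set Su : ℝ := ∑ w : V, ((NCG.graph st).dist u w : ℝ) with hSu
  set Sv' : ℝ := ∑ w : V, ((NCG.graph (Function.update st v tv)).dist v w : ℝ) with hSv'
  set Su' : ℝ := ∑ w : V, ((NCG.graph (Function.update st u tu)).dist u w : ℝ) with hSu'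
  have hα1 : α ≤ Sv' - Sv := by
    have hcast : ((st v).card : ℝ) = (tv.card : ℝ) + 1 := by exact_mod_cast hcv
    nlinarith [Hv]
  have hα2 : Su ≤ Su' := by
    have hcast : ((tu.card : ℕ) : ℝ) = ((st u).card : ℝ) := by exact_mod_cast hcu
    nlinarith [Hu]
  set F : V → ℝ := fun w =>
    ((NCG.graph (Function.update st v tv)).dist v w : ℝ)
    + ((NCG.graph (Function.update st u tu)).dist u w : ℝ)
    - ((NCG.graph st).dist v w : ℝ) - ((NCG.graph st).dist u w : ℝ) with hF
  have hSF : ∑ w : V, F w = Sv' + Su' - Sv - Su := by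
    rw [hF, hSv, hSu, hSv', hSu']
    rw [Finset.sum_sub_distrib, Finset.sum_sub_distrib, Finset.sum_add_distrib]
  have hFv : F v ≤ -1 := by
    have h0 : (NCG.graph (Function.update st v tv)).dist v v = 0 := SimpleGraph.dist_self
    have h0' : (NCG.graph st).dist v v = 0 := SimpleGraph.dist_self
    have hd : 2 ≤ (NCG.graph st).dist u v := by
      have hcm : (NCG.graph st).dist u v = (NCG.graph st).dist v u := SimpleGraph.dist_comm
      omega
    rw [hF]
    simp only [h0, h0']
    have h6' : ((NCG.graph (Function.update st u tu)).dist u v : ℝ) ≤ 1 := by exact_mod_cast f6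
    have hd' : (2 : ℝ) ≤ ((NCG.graph st).dist u v : ℝ) := by exact_mod_cast hd
    push_cast
    linarith
  have hFu : F u ≤ -1 := by
    have h0 : (NCG.graph (Function.update st u tu)).dist u u = 0 := SimpleGraph.dist_self
    have h0' : (NCG.graph st).dist u u = 0 := SimpleGraph.dist_self
    rw [hF]
    simp only [h0, h0']
    have h5' : ((NCG.graph (Function.update st v tv)).dist v u : ℝ) ≤ 1 := by exact_mod_cast f5
    have hd' : (2 : ℝ) ≤ ((NCG.graph st).dist v u : ℝ) := by exact_mod_cast hdist2
    push_cast
    linarith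
  have hFw : ∀ w : V, F w ≤ 2 := by
    intro w
    have h1 := f1 w
    have h2 := f2 w
    have h1' : ((NCG.graph (Function.update st v tv)).dist v w : ℝ)
        ≤ 1 + ((NCG.graph st).dist u w : ℝ) := by exact_mod_cast h1
    have h2' : ((NCG.graph (Function.update st u tu)).dist u w : ℝ)
        ≤ 1 + ((NCG.graph st).dist v w : ℝ) := by exact_mod_cast h2
    rw [hF]
    dsimp only
    linarith
  have hn2 : 2 ≤ Fintype.card V := by
    have hcard : ({u, v} : Finset V).card = 2 := Finset.card_pair huv
    have := Finset.card_le_univ ({u, v} : Finset V)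
    rw [hcard] at this
    exact this
  have hsum : ∑ w : V, F w ≤ 2 * (Fintype.card V : ℝ) - 6 := by
    have hmemu : u ∈ Finset.univ.erase v := Finset.mem_erase.mpr ⟨huv, Finset.mem_univ u⟩
    have hsplit1 : ∑ w : V, F w = F v + ∑ w ∈ Finset.univ.erase v, F w :=
      (Finset.add_sum_erase _ F (Finset.mem_univ v)).symm
    have hsplit2 : ∑ w ∈ Finset.univ.erase v, F w
        = F u + ∑ w ∈ (Finset.univ.erase v).erase u, F w :=
      (Finset.add_sum_erase _ F hmemu).symm
    have hrest : ∑ w ∈ (Finset.univ.erase v).erase u, F w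
        ≤ ((Finset.univ.erase v).erase u).card * 2 := by
      calc ∑ w ∈ (Finset.univ.erase v).erase u, F w
          ≤ ∑ _w ∈ (Finset.univ.erase v).erase u, (2 : ℝ) :=
            Finset.sum_le_sum (fun w _ => hFw w)
        _ = ((Finset.univ.erase v).erase u).card * 2 := by
            rw [Finset.sum_const, nsmul_eq_mul]
    have hcard2 : ((Finset.univ.erase v).erase u).card = Fintype.card V - 2 := by
      rw [Finset.card_erase_of_mem hmemu, Finset.card_erase_of_mem (Finset.mem_univ v),
        Finset.card_univ]
      omega
    have hcardR : (((Finset.univ.erase v).erase u).card : ℝ) = (Fintype.card V : ℝ) - 2 := by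
      rw [hcard2]
      have := hn2
      push_cast [Nat.cast_sub hn2]
      ring
    rw [hsplit1, hsplit2]
    rw [hcardR] at hrest
    linarith
  rw [hSF] at hsum
  linarith
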